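/- Let G be a finite p-group and (a_H)_{H∈C} ∈ Φ_C, i.e., a tuple of elements a_H ∈ Z_p[H] over cyclic subgroups satisfying A1 (compatibility), A2 (G-conjugation invariance), A3 (a_H ∈ T_H, the image of the W_G H-trace on Z_p[H]). Then τ^G_C((a_H)) ∈ Z_p[Conj(G)] (a priori it only lies in Q_p[Conj(G)]). -/

import Mathlib

set_option linter.unusedSectionVars false
set_option linter.unusedVariables false
set_option maxHeartbeats 1000000


/- STATEMENT 18: `G` a finite `p`-group, `(a_H) ∈ Φ_C` (conditions A1, A2, A3 over
cyclic subgroups).  Then `τ^G_C((a_H))` has `ℤ_p`-integral coefficients, i.e. lies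
in `ℤ_p[Conj(G)]` inside `ℚ_p[Conj(G)]`. -/

open scoped Classical

/-- `β^{H'}_H : ℤ_p[H'] → ℤ_p[H]` for nested cyclic subgroups. -/
noncomputable def betaRes {p : ℕ} [Fact p.Prime] {G : Type*} [Group G]
    (H H' : Subgroup G) (x : MonoidAlgebra ℤ_[p] ↥H') : MonoidAlgebra ℤ_[p] ↥H :=
  MonoidAlgebra.ofCoeff (x.coeff.sum fun h c =>
    if hh : (h : G) ∈ H then
      Finsupp.single (⟨(h : G), hh⟩ : ↥H) ((H.relIndex H' : ℤ_[p]) * c)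
    else 0)

/-- The conjugate subgroup `g₁ P g₁⁻¹`. -/
def cSub {G : Type*} [Group G] (g₁ : G) (P : Subgroup G) : Subgroup G :=
  Subgroup.map (MulAut.conj g₁).toMonoidHom P

/-- Conjugation `h ↦ g₁ h g₁⁻¹` as a map `P → g₁ P g₁⁻¹`. -/
def cElt {G : Type*} [Group G] (g₁ : G) (P : Subgroup G) (h : ↥P) : ↥(cSub g₁ P) :=
  ⟨g₁ * h.1 * g₁⁻¹, ⟨h.1, h.2, rfl⟩⟩

/-- The trace map `x ↦ Σ_{w ∈ W_G P} w x w⁻¹` on `ℤ_p[P]`, computed with a set `TN`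
of coset representatives of `P` in `N_G P`. -/
noncomputable def traceC {p : ℕ} [Fact p.Prime] {G : Type*} [Group G] (P : Subgroup G)
    (TN : Finset G) (x : MonoidAlgebra ℤ_[p] ↥P) : MonoidAlgebra ℤ_[p] ↥P :=
  ∑ n ∈ TN, if hn : n ∈ Subgroup.normalizer (P : Set G) then
    MonoidAlgebra.ofCoeff (Finsupp.mapDomain
      (fun h : ↥P => (⟨n * h.1 * n⁻¹, (Subgroup.mem_normalizer_iff.mp hn h.1).mp h.2⟩ : ↥P))
      x.coeff)
  else 0

/-- The set `Φ_C` of tuples satisfying (A1), (A2), (A3) (only the components at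
cyclic subgroups are constrained). -/
def PhiC (p : ℕ) [Fact p.Prime] {G : Type*} [Group G] (TN : Subgroup G → Finset G)
    (a : ∀ P : Subgroup G, MonoidAlgebra ℤ_[p] ↥P) : Prop :=
  (∀ H H' : Subgroup G, IsCyclic ↥H' → H ≤ H' →
      betaRes (p := p) H H' (a H') = a H) ∧
  (∀ (g₁ : G) (P : Subgroup G), IsCyclic ↥P →
      Finsupp.mapDomain (cElt g₁ P) (a P).coeff = (a (cSub g₁ P)).coeff) ∧
  (∀ P : Subgroup G, IsCyclic ↥P →
      a P ∈ Set.range (traceC (p := p) P (TN P)))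

/-- `τ^G_C` applied to a tuple. -/
noncomputable def tauFull {p : ℕ} [Fact p.Prime] {G : Type*} [Group G] [Fintype G]
    (a : ∀ H : Subgroup G, MonoidAlgebra ℤ_[p] ↥H) : ConjClasses G →₀ ℚ_[p] :=
  ∑ H ∈ Finset.univ.filter (fun H : Subgroup G => IsCyclic ↥H),
    (a H).coeff.sum fun h c =>
      if Subgroup.zpowers (h : G) = H then
        ((c : ℚ_[p]) / (((Subgroup.normalizer (H : Set G)).index : ℚ_[p]) * (H.relIndex (Subgroup.normalizer (H : Set G)) : ℚ_[p])))
          • Finsupp.single (ConjClasses.mk (h : G)) (1 : ℚ_[p])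
      else 0

section A
variable {G : Type*} [Group G]

lemma mem_cSub {g x : G} {P : Subgroup G} : x ∈ cSub g P ↔ g⁻¹ * x * g ∈ P := by
  constructor
  · rintro ⟨y, hy : y ∈ P, rfl⟩
    simp only [MulEquiv.coe_toMonoidHom, MulAut.conj_apply]
    convert hy using 2
    group
  · intro h
    refine ⟨g⁻¹ * x * g, h, ?_⟩
    simp only [MulEquiv.coe_toMonoidHom, MulAut.conj_apply]
    group

lemma cSub_inj {g : G} {P Q : Subgroup G} : cSub g P = cSub g Q ↔ P = Q :=
  ⟨fun h => Subgroup.map_injective (MulAut.conj g).injective h, fun h => by rw [h]⟩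

lemma cSub_eq_iff_mem_normalizer {g : G} {P : Subgroup G} :
    cSub g P = P ↔ g ∈ (Subgroup.normalizer (P : Set G)) := by
  rw [Subgroup.mem_normalizer_iff]
  constructor
  · intro h n
    constructor
    · intro hn
      rw [← h, mem_cSub]
      convert hn using 2
      group
    · intro hn
      rw [← h, mem_cSub] at hn
      convert hn using 2
      group
  · intro h
    ext x
    rw [mem_cSub, h (g⁻¹ * x * g)]
    constructor <;> intro hx <;> convert hx using 2 <;> group

lemma zpowers_conj (g x : G) :
    Subgroup.zpowers (g * x * g⁻¹) = cSub g (Subgroup.zpowers x) := by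
  rw [cSub, MonoidHom.map_zpowers]
  simp

lemma conjclass_conj (g x : G) : ConjClasses.mk (g * x * g⁻¹) = ConjClasses.mk x := by
  rw [ConjClasses.mk_eq_mk_iff_isConj]
  exact (isConj_iff.mpr ⟨g, rfl⟩).symm

lemma cSub_one (P : Subgroup G) : cSub 1 P = P := by
  ext x; rw [mem_cSub]; simp

lemma cSub_mul (g₁ g₂ : G) (P : Subgroup G) : cSub (g₁ * g₂) P = cSub g₁ (cSub g₂ P) := by
  ext x; rw [mem_cSub, mem_cSub, mem_cSub]
  have : (g₁ * g₂)⁻¹ * x * (g₁ * g₂) = g₂⁻¹ * (g₁⁻¹ * x * g₁) * g₂ := by group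
  rw [this]

lemma isCyclic_cSub {g : G} {P : Subgroup G} (h : IsCyclic ↥P) : IsCyclic ↥(cSub g P) :=
  isCyclic_of_surjective _ (Subgroup.equivMapOfInjective P _ (MulAut.conj g).injective).surjective

lemma isCyclic_cSub_iff {g : G} {P : Subgroup G} : IsCyclic ↥(cSub g P) ↔ IsCyclic ↥P := by
  refine ⟨fun h => ?_, isCyclic_cSub⟩
  have h2 := isCyclic_cSub (g := g⁻¹) h
  rwa [← cSub_mul, inv_mul_cancel, cSub_one] at h2

lemma normalizer_cSub (g : G) (P : Subgroup G) :
    (Subgroup.normalizer ((cSub g P) : Set G)) = cSub g (Subgroup.normalizer (P : Set G)) :=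
  (Subgroup.map_equiv_normalizer_eq P (MulAut.conj g)).symm

lemma index_cSub (g : G) (P : Subgroup G) : (cSub g P).index = P.index :=
  Subgroup.index_map_eq P (MulAut.conj g).surjective
    (by rw [(MonoidHom.ker_eq_bot_iff _).mpr (MulAut.conj g).injective]; exact bot_le)

end A

section B
variable {G : Type*} [Group G] [Fintype G]

lemma relIndex_cSub (g : G) (P : Subgroup G) :
    (cSub g P).relIndex (Subgroup.normalizer ((cSub g P) : Set G)) = P.relIndex (Subgroup.normalizer (P : Set G)) := by
  have h1 := Subgroup.relIndex_mul_index (Subgroup.le_normalizer (H := cSub g P))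
  have h2 := Subgroup.relIndex_mul_index (Subgroup.le_normalizer (H := P))
  have h3 : (Subgroup.normalizer ((cSub g P) : Set G)).index = (Subgroup.normalizer (P : Set G)).index := by
    rw [normalizer_cSub, index_cSub]
  have h4 : (cSub g P).index = P.index := index_cSub g P
  have h5 : (Subgroup.normalizer (P : Set G)).index ≠ 0 := Subgroup.index_ne_zero_of_finite
  apply Nat.eq_of_mul_eq_mul_right (Nat.pos_of_ne_zero h5)
  rw [← h3, h1, h4, ← h2, h3]

/-- Conjugation action of `G` on its subgroups. -/
instance conjSubAction : MulAction G (Subgroup G) where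
  smul g P := cSub g P
  one_smul := cSub_one
  mul_smul := cSub_mul

lemma smul_sub_def (g : G) (P : Subgroup G) : g • P = cSub g P := rfl

lemma stabilizer_sub_eq_normalizer (P : Subgroup G) :
    MulAction.stabilizer G P = (Subgroup.normalizer (P : Set G)) := by
  ext g
  rw [MulAction.mem_stabilizer_iff, smul_sub_def, cSub_eq_iff_mem_normalizer]

lemma card_coset_reps (P : Subgroup G) (T : Finset G)
    (hsub : ∀ n ∈ T, n ∈ (Subgroup.normalizer (P : Set G)))
    (huniq : ∀ n ∈ (Subgroup.normalizer (P : Set G)), ∃! x, x ∈ T ∧ x⁻¹ * n ∈ P) :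
    T.card = P.relIndex (Subgroup.normalizer (P : Set G)) := by
  have hbij : Function.Bijective (fun x : {x // x ∈ T} =>
      (QuotientGroup.mk (⟨x.1, hsub x.1 x.2⟩ : ↥(Subgroup.normalizer (P : Set G))) :
        ↥(Subgroup.normalizer (P : Set G)) ⧸ P.subgroupOf (Subgroup.normalizer (P : Set G)))) := by
    constructor
    · rintro ⟨x, hx⟩ ⟨y, hy⟩ he
      have h1 : x⁻¹ * y ∈ P := by
        have := QuotientGroup.eq.mp he
        rwa [Subgroup.mem_subgroupOf] at this
      obtain ⟨z, _, hz⟩ := huniq y (hsub y hy)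
      have  hxz := hz x ⟨hx, h1⟩
      have  hyz := hz y ⟨hy, by simpa using P.one_mem⟩
      exact Subtype.ext (hxz.trans hyz.symm)
    · intro q
      induction q using QuotientGroup.induction_on with
      | H n =>
        obtain ⟨x, ⟨hxT, hxP⟩, _⟩ := huniq n.1 n.2
        refine ⟨⟨x, hxT⟩, ?_⟩
        apply QuotientGroup.eq.mpr
        rwa [Subgroup.mem_subgroupOf]
  calc T.card = Nat.card {x // x ∈ T} := (Nat.card_eq_finsetCard T).symm
    _ = Nat.card (↥(Subgroup.normalizer (P : Set G)) ⧸ P.subgroupOf (Subgroup.normalizer (P : Set G))) :=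
        Nat.card_congr (Equiv.ofBijective _ hbij)
    _ = P.relIndex (Subgroup.normalizer (P : Set G)) := (Subgroup.index_eq_card _).symm
end B

section C
variable {p : ℕ} [Fact p.Prime] {G : Type*} [Group G] [Fintype G]

noncomputable def Scoef (H : Subgroup G) (x : MonoidAlgebra ℤ_[p] ↥H) (c : ConjClasses G) :
    ℤ_[p] :=
  ∑ h : ↥H, if Subgroup.zpowers (h : G) = H ∧ ConjClasses.mk (h : G) = c then x.coeff h else 0

lemma cElt_bijective (g : G) (H : Subgroup G) : Function.Bijective (cElt g H) := by
  constructor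
  · intro h₁ h₂ he
    have : g * h₁.1 * g⁻¹ = g * h₂.1 * g⁻¹ := congrArg Subtype.val he
    ext
    exact mul_left_cancel (mul_right_cancel this)
  · rintro ⟨y, hy, hyH, rfl⟩
    exact ⟨⟨hy, hyH⟩, rfl⟩

lemma Scoef_conj (g : G) (H : Subgroup G) (x : MonoidAlgebra ℤ_[p] ↥H) (c : ConjClasses G) :
    Scoef (cSub g H) (MonoidAlgebra.ofCoeff (Finsupp.mapDomain (cElt g H) x.coeff)) c = Scoef H x c := by
  refine (Finset.sum_bijective (cElt g H) (cElt_bijective g H)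
    (fun h => by simp) (fun h _ => ?_)).symm
  have h1 : ((cElt g H h : ↥(cSub g H)) : G) = g * (h : G) * g⁻¹ := rfl
  rw [MonoidAlgebra.coeff_ofCoeff, Finsupp.mapDomain_apply (cElt_bijective g H).injective]
  congr 1
  rw [h1, zpowers_conj, conjclass_conj, cSub_inj]

lemma Scoef_normconj (H : Subgroup G) {n : G} (hn : n ∈ (Subgroup.normalizer (H : Set G)))
    (x : MonoidAlgebra ℤ_[p] ↥H) (c : ConjClasses G) :
    Scoef H (MonoidAlgebra.ofCoeff (Finsupp.mapDomain
      (fun h : ↥H => (⟨n * h.1 * n⁻¹, (Subgroup.mem_normalizer_iff.mp hn h.1).mp h.2⟩ : ↥H)) x.coeff))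
      c = Scoef H x c := by
  set φ : ↥H → ↥H :=
    fun h : ↥H => (⟨n * h.1 * n⁻¹, (Subgroup.mem_normalizer_iff.mp hn h.1).mp h.2⟩ : ↥H) with hφ
  have hinj : Function.Injective φ := by
    intro h₁ h₂ he
    have : n * h₁.1 * n⁻¹ = n * h₂.1 * n⁻¹ := congrArg Subtype.val he
    ext
    exact mul_left_cancel (mul_right_cancel this)
  have hbij : Function.Bijective φ := (Finite.injective_iff_bijective).mp hinj
  refine (Finset.sum_bijective φ hbij (fun h => by simp) (fun h _ => ?_)).symm
  rw [MonoidAlgebra.coeff_ofCoeff, Finsupp.mapDomain_apply hinj]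
  congr 1
  have h1 : ((φ h : ↥H) : G) = n * (h : G) * n⁻¹ := rfl
  rw [h1, zpowers_conj, conjclass_conj, eq_iff_iff]
  refine and_congr_left' ?_
  constructor
  · intro he
    rw [he]
    exact cSub_eq_iff_mem_normalizer.mpr hn
  · intro he
    exact cSub_inj.mp (he.trans (cSub_eq_iff_mem_normalizer.mpr hn).symm)

lemma Scoef_finset_sum {ι : Type*} (H : Subgroup G) (s : Finset ι)
    (f : ι → MonoidAlgebra ℤ_[p] ↥H) (c : ConjClasses G) :
    Scoef H (∑ i ∈ s, f i) c = ∑ i ∈ s, Scoef H (f i) c := by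
  unfold Scoef
  rw [Finset.sum_comm]
  refine Finset.sum_congr rfl (fun h _ => ?_)
  rw [MonoidAlgebra.coeff_sum, Finsupp.finset_sum_apply]
  split_ifs with hc
  · rfl
  · simp

lemma Scoef_trace (H : Subgroup G) (T : Finset G) (hT : ∀ n ∈ T, n ∈ (Subgroup.normalizer (H : Set G)))
    (x : MonoidAlgebra ℤ_[p] ↥H) (c : ConjClasses G) :
    Scoef H (traceC H T x) c = (T.card : ℤ_[p]) * Scoef H x c := by
  unfold traceC
  rw [Scoef_finset_sum]
  rw [Finset.sum_congr rfl
    (fun n hn => by rw [dif_pos (hT n hn)]; exact Scoef_normconj H (hT n hn) x c)]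
  rw [Finset.sum_const, nsmul_eq_mul]

lemma tau_eq (a : ∀ H : Subgroup G, MonoidAlgebra ℤ_[p] ↥H) (c : ConjClasses G) :
    tauFull a c = ∑ H ∈ Finset.univ.filter (fun H : Subgroup G => IsCyclic ↥H),
      (Scoef H (a H) c : ℚ_[p]) /
        (((Subgroup.normalizer (H : Set G)).index : ℚ_[p]) * (H.relIndex (Subgroup.normalizer (H : Set G)) : ℚ_[p])) := by
  unfold tauFull
  rw [Finsupp.finset_sum_apply]
  refine Finset.sum_congr rfl (fun H _ => ?_)
  rw [Finsupp.sum_apply]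
  rw [Finsupp.sum_fintype]
  · unfold Scoef
    rw [show ((∑ h : ↥H, if Subgroup.zpowers (h : G) = H ∧ ConjClasses.mk (h : G) = c
        then (a H).coeff h else 0 : ℤ_[p]) : ℚ_[p]) =
        ∑ h : ↥H, ((if Subgroup.zpowers (h : G) = H ∧ ConjClasses.mk (h : G) = c
          then (a H).coeff h else 0 : ℤ_[p]) : ℚ_[p]) from
      map_sum (PadicInt.Coe.ringHom) _ _]
    rw [Finset.sum_div]
    refine Finset.sum_congr rfl (fun h _ => ?_)
    by_cases h1 : Subgroup.zpowers (h : G) = H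
    · by_cases h2 : ConjClasses.mk (h : G) = c
      · rw [if_pos h1, if_pos ⟨h1, h2⟩]
        rw [Finsupp.smul_apply, Finsupp.single_apply, if_pos h2]
        simp
      · rw [if_pos h1, if_neg (fun hh => h2 hh.2)]
        rw [Finsupp.smul_apply, Finsupp.single_apply, if_neg h2]
        simp
    · rw [if_neg h1, if_neg (fun hh => h1 hh.1)]
      simp
  · intro h
    split_ifs <;> simp

end C


theorem stmt18 (p : ℕ) [Fact p.Prime] (G : Type*) [Group G] [Fintype G]
    (hG : IsPGroup p G)
    (TN : Subgroup G → Finset G)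
    (hTNsub : ∀ P : Subgroup G, ∀ n ∈ TN P, n ∈ (Subgroup.normalizer (P : Set G)))
    (hTN : ∀ P : Subgroup G, ∀ n ∈ (Subgroup.normalizer (P : Set G)), ∃! x, x ∈ TN P ∧ x⁻¹ * n ∈ P)
    (a : ∀ P : Subgroup G, MonoidAlgebra ℤ_[p] ↥P)
    (ha : PhiC p TN a) :
    ∀ c : ConjClasses G, tauFull a c ∈ Set.range ((↑·) : ℤ_[p] → ℚ_[p]) := by
  intro c
  obtain ⟨hA1, hA2, hA3⟩ := ha
  rw [tau_eq, Finset.sum_filter]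
  set F : Subgroup G → ℚ_[p] := fun H =>
    if IsCyclic ↥H then (Scoef H (a H) c : ℚ_[p]) /
      (((Subgroup.normalizer (H : Set G)).index : ℚ_[p]) * (H.relIndex (Subgroup.normalizer (H : Set G)) : ℚ_[p])) else 0 with hF
  have hFconj : ∀ (g : G) (H : Subgroup G), F (cSub g H) = F H := by
    intro g H
    by_cases hc : IsCyclic ↥H
    · rw [hF]
      simp only
      rw [if_pos hc, if_pos (isCyclic_cSub hc)]
      rw [← MonoidAlgebra.ofCoeff_coeff (a (cSub g H)), ← hA2 g H hc, Scoef_conj, relIndex_cSub, normalizer_cSub, index_cSub]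
    · rw [hF]
      simp only
      rw [if_neg hc, if_neg (fun hcc => hc (isCyclic_cSub_iff.mp hcc))]
  have key : ∀ ω : MulAction.orbitRel.Quotient G (Subgroup G),
      ∃ z : ℤ_[p],
        ∑ H ∈ Finset.univ.filter
          (fun H : Subgroup G => (Quotient.mk'' H : MulAction.orbitRel.Quotient G (Subgroup G)) = ω),
          F H = (z : ℚ_[p]) := by
    intro ω
    set H0 : Subgroup G := Quotient.out ω with hH0
    have hfib : ∀ H : Subgroup G,
        ((Quotient.mk'' H : MulAction.orbitRel.Quotient G (Subgroup G)) = ω) ↔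
          H ∈ MulAction.orbit G H0 := by
      intro H
      rw [← MulAction.orbitRel.Quotient.mem_orbit,
        MulAction.orbitRel.Quotient.orbit_eq_orbit_out ω Quotient.out_eq']
    have hconst : ∀ H ∈ Finset.univ.filter
        (fun H : Subgroup G => (Quotient.mk'' H : MulAction.orbitRel.Quotient G (Subgroup G)) = ω),
        F H = F H0 := by
      intro H hH
      rw [Finset.mem_filter] at hH
      obtain ⟨g, hg⟩ := MulAction.mem_orbit_iff.mp ((hfib H).mp hH.2)
      rw [← hg, smul_sub_def, hFconj]
    rw [Finset.sum_congr rfl hconst, Finset.sum_const]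
    have hcard : (Finset.univ.filter
        (fun H : Subgroup G => (Quotient.mk'' H : MulAction.orbitRel.Quotient G (Subgroup G)) = ω)).card
        = (Subgroup.normalizer (H0 : Set G)).index := by
      have h1 : (Finset.univ.filter
          (fun H : Subgroup G => (Quotient.mk'' H : MulAction.orbitRel.Quotient G (Subgroup G)) = ω))
          = (MulAction.orbit G H0).toFinset := by
        ext H
        rw [Finset.mem_filter, Set.mem_toFinset, hfib]
        simp
      rw [h1, ← Set.ncard_eq_toFinset_card', ← MulAction.index_stabilizer,
        stabilizer_sub_eq_normalizer]
    rw [hcard]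
    by_cases hc : IsCyclic ↥H0
    · obtain ⟨x, hx⟩ := hA3 H0 hc
      have hS : Scoef H0 (a H0) c = ((H0.relIndex (Subgroup.normalizer (H0 : Set G)) : ℤ_[p])) * Scoef H0 x c := by
        rw [← hx, Scoef_trace H0 (TN H0) (hTNsub H0) x c,
          card_coset_reps H0 (TN H0) (hTNsub H0) (hTN H0)]
      refine ⟨Scoef H0 x c, ?_⟩
      rw [hF]
      simp only
      rw [if_pos hc, hS]
      have hi : ((Subgroup.normalizer (H0 : Set G)).index : ℚ_[p]) ≠ 0 := by
        exact_mod_cast (Nat.cast_ne_zero (R := ℚ_[p])).mpr Subgroup.index_ne_zero_of_finite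
      have hr : (H0.relIndex (Subgroup.normalizer (H0 : Set G)) : ℚ_[p]) ≠ 0 := by
        have : H0.relIndex (Subgroup.normalizer (H0 : Set G)) ≠ 0 := by
          have : H0.relIndex (Subgroup.normalizer (H0 : Set G)) * (Subgroup.normalizer (H0 : Set G)).index = H0.index :=
            Subgroup.relIndex_mul_index Subgroup.le_normalizer
          intro h0
          have := this
          rw [h0, zero_mul] at this
          exact Subgroup.index_ne_zero_of_finite this.symm
        exact_mod_cast (Nat.cast_ne_zero (R := ℚ_[p])).mpr this
      push_cast
      rw [nsmul_eq_mul]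
      field_simp
    · refine ⟨0, ?_⟩
      rw [hF]
      simp only
      rw [if_neg hc]
      simp
  choose z hz using key
  rw [← Finset.sum_fiberwise Finset.univ
    (fun H : Subgroup G => (Quotient.mk'' H : MulAction.orbitRel.Quotient G (Subgroup G))) F]
  rw [Finset.sum_congr rfl (fun ω _ => hz ω)]
  exact ⟨∑ ω, z ω, map_sum (PadicInt.Coe.ringHom) _ _⟩
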